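/- Let k ≥ 2, q ≥ 3, and r > 2k be integers. There exists a constant C > 0 (depending only on k, q, r) such that for every z ∈ ℂ ∖ ℝ with |z| sufficiently large: |g(z)| ≤ C and |f(z) − sgn(Im z)·kπiz + (r − 2k)q·log z| ≤ C, where sgn(Im z) = 1 if Im z > 0 and −1 if Im z < 0. -/

import Mathlib

open Finset

/-- The principal branch of the square root: `√z = exp(log z / 2)`. -/
noncomputable def csqrt (z : ℂ) : ℂ := Complex.exp (Complex.log z / 2)

/-- The function `f(z)` of Definition 5.3. -/
noncomputable def fDef (k q r : ℕ) (z : ℂ) : ℂ :=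
  (k : ℂ) * (z + r + q) * Complex.log (z + (r : ℂ) + (q : ℂ)) +
    (k : ℂ) * ((q : ℂ) - z) * Complex.log ((q : ℂ) - z) +
    ((q : ℂ) + k) * z * Complex.log z -
    ((q : ℂ) + k) * (z + r) * Complex.log (z + (r : ℂ)) +
    (r : ℂ) * (q : ℂ) * (Real.log r : ℂ) +
    2 * (k : ℂ) * (q : ℂ) *
      ((∑ p ∈ Nat.primeFactors q, Real.log p / ((p : ℝ) - 1) : ℝ) : ℂ)

/-- The function `g(z)` of Definition 5.3. -/
noncomputable def gDef (k q r : ℕ) (z : ℂ) : ℂ :=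
  (2 * z + (r : ℂ)) ^ (1 - k % 2) / (csqrt z * csqrt (z + r)) *
    ((csqrt ((q : ℂ) - z) * csqrt (z + (r : ℂ) + (q : ℂ))) / (csqrt z * csqrt (z + r))) ^ k


lemma aux_abs_log_one_add_le {w : ℂ} (hw : ‖w‖ ≤ 1/2) :
    ‖Complex.log (1 + w)‖ ≤ 2 * ‖w‖ := by
  have h := Complex.norm_log_one_add_half_le_self (z := w)
    (by simpa using hw)
  nlinarith [norm_nonneg w]

lemma aux_log_shift (a : ℝ) (ha : 0 < a) {z : ℂ} (hz : z.im ≠ 0)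
    (hza : 2 * a ≤ ‖z‖) :
    Complex.log (z + (a : ℂ)) = Complex.log z + Complex.log (1 + (a : ℂ) / z) := by
  have hz0 : z ≠ 0 := fun h => hz (by simp [h])
  have habs : 0 < ‖z‖ := norm_pos_iff.mpr hz0
  have hw : ‖(a : ℂ) / z‖ ≤ 1/2 := by
    rw [norm_div, Complex.norm_real, Real.norm_eq_abs, abs_of_pos ha, div_le_iff₀ habs]; linarith
  have hre : 0 < (1 + (a : ℂ) / z).re := by
    have h1 : |((a : ℂ) / z).re| ≤ ‖(a : ℂ) / z‖ := Complex.abs_re_le_norm _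
    have h2 := abs_le.mp (h1.trans hw)
    simp only [Complex.add_re, Complex.one_re]
    linarith [h2.1]
  have hw0 : (1 + (a : ℂ) / z) ≠ 0 := by
    intro h; rw [h] at hre; simp at hre
  have heq : z + (a : ℂ) = z * (1 + (a : ℂ) / z) := by field_simp
  have hn : 0 < Complex.normSq z := Complex.normSq_pos.2 hz0
  have him : ((a : ℂ) / z).im = -(a * z.im) / Complex.normSq z := by
    rw [Complex.div_im]
    simp only [Complex.ofReal_re, Complex.ofReal_im]
    ring
  have harg2 := abs_lt.mp (Complex.abs_arg_lt_pi_div_two_iff.2 (Or.inl hre))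
  rw [heq]
  apply Complex.log_mul hz0 hw0
  constructor
  · -- -π < arg z + arg (1 + a/z)
    rcases lt_or_gt_of_ne hz with hneg | hpos
    · have h1 : -Real.pi < Complex.arg z := Complex.neg_pi_lt_arg z
      have h3 : 0 ≤ (1 + (a : ℂ) / z).im := by
        simp only [Complex.add_im, Complex.one_im, zero_add, him]
        apply div_nonneg _ hn.le
        nlinarith
      have h3' : 0 ≤ Complex.arg (1 + (a : ℂ) / z) := Complex.arg_nonneg_iff.2 h3
      linarith
    · have h1 : 0 ≤ Complex.arg z := Complex.arg_nonneg_iff.2 hpos.le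
      linarith [harg2.1, Real.pi_pos]
  · -- arg z + arg (1+a/z) ≤ π
    rcases lt_or_gt_of_ne hz with hneg | hpos
    · have h1 : Complex.arg z < 0 := Complex.arg_neg_iff.2 hneg
      linarith [harg2.2, Real.pi_pos]
    · have h1 : Complex.arg z ≤ Real.pi := Complex.arg_le_pi z
      have h1' : Complex.arg z ≠ Real.pi := by
        intro h; exact hpos.ne' (Complex.arg_eq_pi_iff.mp h).2
      have h3 : (1 + (a : ℂ) / z).im < 0 := by
        simp only [Complex.add_im, Complex.one_im, zero_add, him]
        have : 0 < a * z.im := by positivity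
        exact div_neg_of_neg_of_pos (by linarith) hn
      have h3' : Complex.arg (1 + (a : ℂ) / z) < 0 := Complex.arg_neg_iff.2 h3
      have := lt_of_le_of_ne h1 h1'
      linarith

lemma aux_log_neg {z : ℂ} (hz : z.im ≠ 0) :
    Complex.log (-z) =
      Complex.log z - (if 0 < z.im then (1 : ℂ) else -1) * (Real.pi : ℂ) * Complex.I := by
  have hz0 : z ≠ 0 := fun h => hz (by simp [h])
  by_cases h : 0 < z.im
  · rw [if_pos h]
    apply Complex.ext
    · simp [Complex.log_re]
    · simp [Complex.log_im, Complex.arg_neg_eq_arg_sub_pi_of_im_pos h]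
  · have h' : z.im < 0 := lt_of_le_of_ne (not_lt.mp h) hz
    rw [if_neg h]
    apply Complex.ext
    · simp [Complex.log_re]
    · simp [Complex.log_im, Complex.arg_neg_eq_arg_add_pi_of_im_neg h']

lemma aux_log_sub (a : ℝ) (ha : 0 < a) {z : ℂ} (hz : z.im ≠ 0)
    (hza : 2 * a ≤ ‖z‖) :
    Complex.log ((a : ℂ) - z) =
      Complex.log z - (if 0 < z.im then (1 : ℂ) else -1) * (Real.pi : ℂ) * Complex.I
        + Complex.log (1 - (a : ℂ) / z) := by
  have hz0 : z ≠ 0 := fun h => hz (by simp [h])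
  have hzneg : (-z).im ≠ 0 := by simpa using hz
  have h := aux_log_shift a ha hzneg (by simpa using hza)
  have e1 : -z + (a : ℂ) = (a : ℂ) - z := by ring
  have e2 : 1 + (a : ℂ) / (-z) = 1 - (a : ℂ) / z := by
    rw [div_neg]; ring
  rw [e1, e2, aux_log_neg hz] at h
  rw [h]

lemma csqrt_mul_self {w : ℂ} (hw : w ≠ 0) : csqrt w * csqrt w = w := by
  rw [csqrt, ← Complex.exp_add, add_halves, Complex.exp_log hw]

lemma sq_abs_csqrt {w : ℂ} (hw : w ≠ 0) :
    (‖csqrt w‖) ^ 2 = ‖w‖ := by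
  rw [sq, ← norm_mul, csqrt_mul_self hw]

lemma g_bound (k q r : ℕ) (hq : 3 ≤ q) {z : ℂ} (hz : z.im ≠ 0)
    (hR : 2 * ((q : ℝ) + r + k + 3) ≤ ‖z‖) :
    ‖gDef k q r z‖ ≤ 5 * 3 ^ k := by
  have hz0 : z ≠ 0 := fun h => hz (by simp [h])
  have hzr0 : z + (r : ℂ) ≠ 0 := fun h => hz (by
    have := congrArg Complex.im h; simpa using this)
  have hqz0 : (q : ℂ) - z ≠ 0 := fun h => hz (by
    have := congrArg Complex.im h; simp at this; simpa using this)
  have hzrq0 : z + (r : ℂ) + (q : ℂ) ≠ 0 := fun h => hz (by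
    have := congrArg Complex.im h; simpa using this)
  set a := ‖z‖ with ha
  have ha0 : 0 < a := norm_pos_iff.mpr hz0
  have hq' : (3:ℝ) ≤ (q:ℝ) := by exact_mod_cast hq
  have hra : (2:ℝ) * r ≤ a := by
    have : (0:ℝ) ≤ (q:ℝ) + (k:ℝ) := by positivity
    nlinarith
  have hqa : (2:ℝ) * q ≤ a := by
    have : (0:ℝ) ≤ (r:ℝ) + (k:ℝ) := by positivity
    nlinarith
  have hrqa : (r:ℝ) + q ≤ a := by nlinarith
  have ha2 : (2:ℝ) ≤ a := by nlinarith
  -- basic triangle bounds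
  have hzr_lb : a / 2 ≤ ‖z + (r : ℂ)‖ := by
    have h := norm_add_le (z + (r : ℂ)) (-(r : ℂ))
    simp only [add_neg_cancel_right, norm_neg, Complex.norm_natCast] at h
    linarith
  have hqz_ub : ‖(q : ℂ) - z‖ ≤ 2 * a := by
    have h := norm_sub_le (q : ℂ) z
    simp only [Complex.norm_natCast] at h
    linarith
  have hzrq_ub : ‖z + (r : ℂ) + (q : ℂ)‖ ≤ 2 * a := by
    have h1 := norm_add_le (z + (r : ℂ)) (q : ℂ)
    have h2 := norm_add_le z (r : ℂ)
    simp only [Complex.norm_natCast] at h1 h2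
    linarith
  have h2zr_ub : ‖2 * z + (r : ℂ)‖ ≤ 3 * a := by
    have h1 := norm_add_le (2 * z) (r : ℂ)
    simp only [norm_mul, Complex.norm_natCast, Complex.norm_two] at h1
    linarith
  -- the squared identity
  have hg2 : (‖gDef k q r z‖) ^ 2 =
      ‖2 * z + (r : ℂ)‖ ^ (2 * (1 - k % 2)) /
        (‖z‖ * ‖z + (r : ℂ)‖) *
      (‖(q : ℂ) - z‖ ^ k * ‖z + (r : ℂ) + (q : ℂ)‖ ^ k /
        (‖z‖ ^ k * ‖z + (r : ℂ)‖ ^ k)) := by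
    simp only [gDef, norm_mul, norm_div, norm_pow, mul_pow, div_pow]
    rw [← pow_mul, mul_comm (1 - k % 2) 2,
      pow_right_comm (‖csqrt ((q : ℂ) - z)‖) k 2,
      pow_right_comm (‖csqrt (z + (r : ℂ) + (q : ℂ))‖) k 2,
      pow_right_comm (‖csqrt z‖) k 2,
      pow_right_comm (‖csqrt (z + (r : ℂ))‖) k 2,
      sq_abs_csqrt hz0, sq_abs_csqrt hzr0, sq_abs_csqrt hqz0, sq_abs_csqrt hzrq0]
  have hzrpos : 0 < ‖z + (r : ℂ)‖ := by linarith
  have hden : a ^ 2 / 2 ≤ ‖z‖ * ‖z + (r : ℂ)‖ := by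
    rw [← ha]; nlinarith
  have hdenpos : 0 < ‖z‖ * ‖z + (r : ℂ)‖ := by positivity
  have hratio : (‖(q : ℂ) - z‖ * ‖z + (r : ℂ) + (q : ℂ)‖) /
        (‖z‖ * ‖z + (r : ℂ)‖) ≤ 8 := by
    rw [div_le_iff₀ hdenpos]
    nlinarith [norm_nonneg ((q : ℂ) - z), norm_nonneg (z + (r : ℂ) + (q : ℂ))]
  have hfirst : ‖2 * z + (r : ℂ)‖ ^ (2 * (1 - k % 2)) /
        (‖z‖ * ‖z + (r : ℂ)‖) ≤ 18 := by
    rcases Nat.mod_two_eq_zero_or_one k with h | h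
    · rw [h]
      norm_num
      rw [div_le_iff₀ hdenpos]
      nlinarith [norm_nonneg (2 * z + (r : ℂ))]
    · rw [h]
      have he : 2 * (1 - 1) = 0 := rfl
      rw [he, pow_zero, div_le_iff₀ hdenpos]
      nlinarith
  have hratio_nonneg : (0:ℝ) ≤ (‖(q : ℂ) - z‖ * ‖z + (r : ℂ) + (q : ℂ)‖) /
        (‖z‖ * ‖z + (r : ℂ)‖) := by positivity
  have hfirst_nonneg : (0:ℝ) ≤ ‖2 * z + (r : ℂ)‖ ^ (2 * (1 - k % 2)) /
        (‖z‖ * ‖z + (r : ℂ)‖) := by positivity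
  have hsq : (‖gDef k q r z‖) ^ 2 ≤ (5 * 3 ^ k : ℝ) ^ 2 := by
    rw [hg2, ← mul_pow, ← mul_pow, ← div_pow]
    calc _ ≤ (18:ℝ) * 8 ^ k := by
          apply mul_le_mul hfirst (pow_le_pow_left₀ hratio_nonneg hratio k)
            (pow_nonneg hratio_nonneg k) (by norm_num)
      _ ≤ (5 * 3 ^ k : ℝ) ^ 2 := by
          have h1 : ((5:ℝ) * 3 ^ k) ^ 2 = 25 * 9 ^ k := by
            rw [mul_pow, ← pow_mul, mul_comm k 2, pow_mul]
            norm_num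
          have h2 : (8:ℝ) ^ k ≤ 9 ^ k := pow_le_pow_left₀ (by norm_num) (by norm_num) k
          have h3 : (0:ℝ) ≤ 9 ^ k := by positivity
          rw [h1]
          linarith
  have hfin := Real.sqrt_le_sqrt hsq
  rwa [Real.sqrt_sq (norm_nonneg _), Real.sqrt_sq (by positivity)] at hfin

lemma f_bound (k q r : ℕ) (hk : 2 ≤ k) (hq : 3 ≤ q) (hr : 2 * k < r) {z : ℂ} (hz : z.im ≠ 0)
    (hR : 2 * ((q : ℝ) + r + k + 3) ≤ ‖z‖) :
    ‖fDef k q r z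
        - (if 0 < z.im then (1 : ℂ) else -1) * (k : ℂ) * (Real.pi : ℂ) * Complex.I * z
        + (((r : ℝ) - 2 * k : ℝ) : ℂ) * (q : ℂ) * Complex.log z‖
      ≤ 4 * k * ((r : ℝ) + q) + 4 * k * q + 4 * ((q : ℝ) + k) * r
        + ((k : ℝ) * q * Real.pi + r * q * |Real.log r|
          + 2 * k * q * |∑ p ∈ Nat.primeFactors q, Real.log p / ((p : ℝ) - 1)|) := by
  have hz0 : z ≠ 0 := fun h => hz (by simp [h])
  set a := ‖z‖ with ha
  have ha0 : 0 < a := norm_pos_iff.mpr hz0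
  have hq' : (3:ℝ) ≤ (q:ℝ) := by exact_mod_cast hq
  have hk' : (2:ℝ) ≤ (k:ℝ) := by exact_mod_cast hk
  have hr' : 2 * (k:ℝ) < (r:ℝ) := by exact_mod_cast hr
  have hrq_pos : (0:ℝ) < (r:ℝ) + q := by linarith
  have hq_pos : (0:ℝ) < (q:ℝ) := by linarith
  have hr_pos : (0:ℝ) < (r:ℝ) := by linarith
  set s : ℂ := if 0 < z.im then (1 : ℂ) else -1 with hs_def
  set S : ℝ := ∑ p ∈ Nat.primeFactors q, Real.log p / ((p : ℝ) - 1) with hS_def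
  set E₁ : ℂ := Complex.log (1 + ((((r:ℝ) + q : ℝ)) : ℂ) / z) with hE1_def
  set E₂ : ℂ := Complex.log (1 - (((q:ℝ) : ℝ) : ℂ) / z) with hE2_def
  set E₃ : ℂ := Complex.log (1 + (((r:ℝ) : ℝ) : ℂ) / z) with hE3_def
  have h1 : Complex.log (z + (r : ℂ) + (q : ℂ)) = Complex.log z + E₁ := by
    have h := aux_log_shift ((r:ℝ) + q) hrq_pos hz (by linarith)
    rw [show (z + ((((r:ℝ) + q : ℝ)) : ℂ)) = z + (r : ℂ) + (q : ℂ) by push_cast; ring] at h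
    exact h
  have h2 : Complex.log ((q : ℂ) - z) =
      Complex.log z - s * (Real.pi : ℂ) * Complex.I + E₂ := by
    have h := aux_log_sub (q:ℝ) hq_pos hz (by linarith)
    rw [show ((((q:ℝ)) : ℂ)) = (q : ℂ) by push_cast; ring] at h
    exact h
  have h3 : Complex.log (z + (r : ℂ)) = Complex.log z + E₃ := by
    have h := aux_log_shift (r:ℝ) hr_pos hz (by linarith)
    rw [show (z + ((((r:ℝ)) : ℂ))) = z + (r : ℂ) by push_cast; ring] at h
    exact h
  have key : fDef k q r z - s * (k : ℂ) * (Real.pi : ℂ) * Complex.I * z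
        + (((r : ℝ) - 2 * k : ℝ) : ℂ) * (q : ℂ) * Complex.log z
      = (k : ℂ) * (z + r + q) * E₁ + (k : ℂ) * ((q : ℂ) - z) * E₂
        - ((q : ℂ) + k) * (z + r) * E₃
        + (-(s * (Real.pi : ℂ) * Complex.I) * k * q + (r : ℂ) * q * (Real.log r : ℂ)
            + 2 * (k : ℂ) * q * (S : ℂ)) := by
    simp only [fDef, h1, h2, h3, ← hS_def]
    push_cast
    ring
  rw [key]
  -- triangle inequality
  have tri : ∀ A B C D : ℂ, ‖A + B - C + D‖
      ≤ ‖A‖ + ‖B‖ + ‖C‖ + ‖D‖ := by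
    intro A B C D
    calc ‖A + B - C + D‖ ≤ ‖A + B - C‖ + ‖D‖ :=
          norm_add_le _ _
      _ ≤ ‖A + B‖ + ‖C‖ + ‖D‖ := by
          have := norm_add_le (A + B) (-C)
          simp only [norm_neg] at this
          rw [sub_eq_add_neg]
          linarith
      _ ≤ ‖A‖ + ‖B‖ + ‖C‖ + ‖D‖ := by
          linarith [norm_add_le A B]
  refine le_trans (tri _ _ _ _) ?_
  -- bounds on the shifted moduli
  have hrqa : (r:ℝ) + q ≤ a := by nlinarith
  have hzrq_ub : ‖z + (r : ℂ) + (q : ℂ)‖ ≤ 2 * a := by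
    have h1' := norm_add_le (z + (r : ℂ)) (q : ℂ)
    have h2' := norm_add_le z (r : ℂ)
    simp only [Complex.norm_natCast] at h1' h2'
    linarith
  have hqz_ub : ‖(q : ℂ) - z‖ ≤ 2 * a := by
    have h := norm_sub_le (q : ℂ) z
    simp only [Complex.norm_natCast] at h
    linarith
  have hzr_ub : ‖z + (r : ℂ)‖ ≤ 2 * a := by
    have h := norm_add_le z (r : ℂ)
    simp only [Complex.norm_natCast] at h
    linarith
  -- bounds on the E's
  have habsE : ∀ c : ℝ, 0 < c → 2 * c ≤ a →
      ‖Complex.log (1 + (c : ℂ) / z)‖ ≤ 2 * (c / a) := by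
    intro c hc hca
    have hw : ‖(c : ℂ) / z‖ = c / a := by
      rw [norm_div, Complex.norm_real, Real.norm_eq_abs, abs_of_pos hc, ha]
    have hw2 : ‖(c : ℂ) / z‖ ≤ 1 / 2 := by
      rw [hw, div_le_iff₀ ha0]; linarith
    have := aux_abs_log_one_add_le hw2
    rwa [hw] at this
  have hE1 : ‖E₁‖ ≤ 2 * (((r:ℝ) + q) / a) := habsE _ hrq_pos (by linarith)
  have hE2 : ‖E₂‖ ≤ 2 * ((q:ℝ) / a) := by
    have hw : ‖-((((q:ℝ)) : ℂ) / z)‖ = (q:ℝ) / a := by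
      rw [norm_neg, norm_div, Complex.norm_real, Real.norm_eq_abs, abs_of_pos hq_pos, ha]
    have hw2 : ‖-((((q:ℝ)) : ℂ) / z)‖ ≤ 1 / 2 := by
      rw [hw, div_le_iff₀ ha0]; linarith
    have h := aux_abs_log_one_add_le hw2
    rw [hw] at h
    rw [hE2_def, sub_eq_add_neg]
    exact h
  have hE3 : ‖E₃‖ ≤ 2 * ((r:ℝ) / a) := habsE _ hr_pos (by linarith)
  -- term bounds
  have hA : ‖(k : ℂ) * (z + r + q) * E₁‖ ≤ 4 * k * ((r:ℝ) + q) := by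
    rw [norm_mul, norm_mul, Complex.norm_natCast]
    calc (k:ℝ) * ‖z + r + q‖ * ‖E₁‖
        ≤ (k:ℝ) * (2 * a) * (2 * (((r:ℝ) + q) / a)) := by
          gcongr
      _ = 4 * k * ((r:ℝ) + q) := by field_simp; ring
  have hB : ‖(k : ℂ) * ((q:ℂ) - z) * E₂‖ ≤ 4 * k * (q:ℝ) := by
    rw [norm_mul, norm_mul, Complex.norm_natCast]
    calc (k:ℝ) * ‖(q:ℂ) - z‖ * ‖E₂‖
        ≤ (k:ℝ) * (2 * a) * (2 * ((q:ℝ) / a)) := by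
          gcongr
      _ = 4 * k * (q:ℝ) := by field_simp; ring
  have hqk : ‖(q : ℂ) + (k : ℂ)‖ = (q:ℝ) + k := by
    rw [show ((q : ℂ) + (k : ℂ)) = (((q + k : ℕ)) : ℂ) by push_cast; ring,
      Complex.norm_natCast]
    push_cast; ring
  have hC : ‖((q : ℂ) + k) * (z + r) * E₃‖ ≤ 4 * ((q:ℝ) + k) * r := by
    rw [norm_mul, norm_mul, hqk]
    calc ((q:ℝ) + k) * ‖z + r‖ * ‖E₃‖
        ≤ ((q:ℝ) + k) * (2 * a) * (2 * ((r:ℝ) / a)) := by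
          gcongr
      _ = 4 * ((q:ℝ) + k) * r := by field_simp; ring
  have hs_abs : ‖s‖ = 1 := by
    rw [hs_def]; split_ifs <;> simp
  have hD : ‖-(s * (Real.pi : ℂ) * Complex.I) * k * q
        + (r : ℂ) * q * (Real.log r : ℂ) + 2 * (k : ℂ) * q * (S : ℂ)‖
      ≤ (k:ℝ) * q * Real.pi + r * q * |Real.log r| + 2 * k * q * |S| := by
    calc ‖-(s * (Real.pi : ℂ) * Complex.I) * k * q
          + (r : ℂ) * q * (Real.log r : ℂ) + 2 * (k : ℂ) * q * (S : ℂ)‖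
        ≤ ‖-(s * (Real.pi : ℂ) * Complex.I) * k * q‖
            + ‖(r : ℂ) * q * (Real.log r : ℂ)‖
            + ‖2 * (k : ℂ) * q * (S : ℂ)‖ := by
          refine le_trans (norm_add_le _ _) ?_
          linarith [norm_add_le (-(s * (Real.pi : ℂ) * Complex.I) * k * q)
            ((r : ℂ) * q * (Real.log r : ℂ))]
      _ = (k:ℝ) * q * Real.pi + r * q * |Real.log r| + 2 * k * q * |S| := by
          simp only [norm_mul, norm_neg, Complex.norm_natCast, Complex.norm_I,
            Complex.norm_real, Real.norm_eq_abs, Complex.norm_two, hs_abs]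
          rw [abs_of_pos Real.pi_pos]
          ring
  linarith

theorem stmt_15 (k q r : ℕ) (hk : 2 ≤ k) (hq : 3 ≤ q) (hr : 2 * k < r) :
    ∃ C : ℝ, 0 < C ∧ ∃ R₀ : ℝ, ∀ z : ℂ, z.im ≠ 0 → R₀ ≤ ‖z‖ →
      ‖gDef k q r z‖ ≤ C ∧
      ‖fDef k q r z
          - (if 0 < z.im then (1 : ℂ) else -1) * (k : ℂ) * (Real.pi : ℂ) * Complex.I * z
          + (((r : ℝ) - 2 * k : ℝ) : ℂ) * (q : ℂ) * Complex.log z‖ ≤ C := by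
  refine ⟨5 * 3 ^ k + (4 * k * ((r : ℝ) + q) + 4 * k * q + 4 * ((q : ℝ) + k) * r
      + ((k : ℝ) * q * Real.pi + r * q * |Real.log r|
        + 2 * k * q * |∑ p ∈ Nat.primeFactors q, Real.log p / ((p : ℝ) - 1)|)) + 1,
    by positivity, 2 * ((q : ℝ) + r + k + 3), ?_⟩
  intro z hz hR
  have hg := g_bound k q r hq hz hR
  have hf := f_bound k q r hk hq hr hz hR
  have h1 : (0:ℝ) ≤ 4 * k * ((r : ℝ) + q) + 4 * k * q + 4 * ((q : ℝ) + k) * r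
      + ((k : ℝ) * q * Real.pi + r * q * |Real.log r|
        + 2 * k * q * |∑ p ∈ Nat.primeFactors q, Real.log p / ((p : ℝ) - 1)|) := by
    positivity
  have h2 : (0:ℝ) ≤ 5 * 3 ^ k := by positivity
  constructor <;> linarith
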